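/- The conjugation operator J_n on the q-deformed space F_n^{(q)}, defined by reversing the order of tensor components (ξ_{i_1}⊗⋯⊗ξ_{i_n} ↦ ξ_{i_n}⊗⋯⊗ξ_{i_1}), is unitary, i.e. it preserves the q-deformed inner product: ⟨J_n x, J_n y⟩_q = ⟨x, y⟩_q for all x, y. -/
import Mathlib


open Finset

/-- The number of inversions of a permutation of `Fin n`. -/
def invCount {n : ℕ} (σ : Equiv.Perm (Fin n)) : ℕ :=
  (Finset.univ.filter (fun p : Fin n × Fin n => p.1 < p.2 ∧ σ p.2 < σ p.1)).card

/-- The `n`-fold tensor power `(ℂ^d)^{⊗ n}` modeled by its coefficients with respect to the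
natural basis `{ξ_{i_1} ⊗ ⋯ ⊗ ξ_{i_n}}` indexed by tuples `Fin n → Fin d`. -/
abbrev Tens (d n : ℕ) := (Fin n → Fin d) → ℂ

/-- The q-deformed inner product on `(ℂ^d)^{⊗ n}`, determined by
`⟨ξ_{i_1}⊗⋯⊗ξ_{i_n}, ξ_{j_1}⊗⋯⊗ξ_{j_n}⟩_q = Σ_σ q^{inv(σ)} δ_{i_1, j_{σ(1)}} ⋯ δ_{i_n, j_{σ(n)}}`,
extended sesquilinearly (conjugate-linear in the first variable). -/
noncomputable def qInner (q : ℝ) {d n : ℕ} (x y : Tens d n) : ℂ :=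
  ∑ f : Fin n → Fin d, ∑ g : Fin n → Fin d,
    (starRingEnd ℂ) (x f) * y g *
      ∑ σ : Equiv.Perm (Fin n),
        (q : ℂ) ^ invCount σ * (if ∀ k, f k = g (σ k) then 1 else 0)

/-- The conjugation operator `J_n` reversing the order of tensor components:
`ξ_{i_1}⊗⋯⊗ξ_{i_n} ↦ ξ_{i_n}⊗⋯⊗ξ_{i_1}`, expressed on coefficients. -/
def reversal {d n : ℕ} (x : Tens d n) : Tens d n := fun f => x (f ∘ Fin.rev)

lemma invCount_conj {n : ℕ} (σ : Equiv.Perm (Fin n)) :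
    invCount (Fin.revPerm.permCongr σ) = invCount σ := by
  unfold invCount
  apply Finset.card_bij' (fun p _ => (Fin.rev p.2, Fin.rev p.1))
    (fun p _ => (Fin.rev p.2, Fin.rev p.1))
  all_goals
    intro p hp
    simp only [mem_filter, mem_univ, true_and, Equiv.permCongr_apply, Equiv.Perm.inv_def,
      Fin.revPerm_symm, Fin.revPerm_apply, Fin.rev_rev, Fin.rev_lt_rev, Prod.mk.injEq] at hp ⊢
    try exact ⟨hp.1, hp.2⟩
    try exact ⟨hp.2, hp.1⟩

/-- `J_n` is unitary on `F_n^{(q)}`: it preserves the q-deformed inner product. -/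
theorem reversal_qInner (d : ℕ) (hd : 2 ≤ d) (q : ℝ) (hq : -1 < q ∧ q < 1) (n : ℕ)
    (x y : Tens d n) : qInner q (reversal x) (reversal y) = qInner q x y := by
  unfold qInner reversal
  have he : ∀ f : Fin n → Fin d,
      (Equiv.arrowCongr (Fin.revPerm (n := n)) (Equiv.refl (Fin d))).symm f = f ∘ Fin.rev := by
    intro f; funext k; simp [Equiv.arrowCongr]
  refine Fintype.sum_equiv (Equiv.arrowCongr Fin.revPerm (Equiv.refl (Fin d))).symm _ _
    (fun f => ?_)
  refine Fintype.sum_equiv (Equiv.arrowCongr Fin.revPerm (Equiv.refl (Fin d))).symm _ _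
    (fun g => ?_)
  rw [he f, he g]
  congr 1
  refine Fintype.sum_equiv (Fin.revPerm.permCongr) _ _ (fun σ => ?_)
  rw [invCount_conj]
  congr 1
  have : (∀ k, f k = g (σ k)) ↔ (∀ k, (f ∘ Fin.rev) k = (g ∘ Fin.rev) (Fin.revPerm.permCongr σ k)) := by
    simp only [Function.comp, Equiv.permCongr_apply, Fin.revPerm_symm, Fin.revPerm_apply,
      Fin.rev_rev]
    exact ⟨fun h k => h (Fin.rev k), fun h k => by simpa [Fin.rev_rev] using h (Fin.rev k)⟩
  simp only [this]
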